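/- In a reduced root system Φ, let α0, α1, β0, β1, γ be five roots (with α0,α1,β0,β1 possibly equal) such that α0 + β0 = γ = α1 + β1. Then in each of the pairs (α0+α1, α0+β1), (β0+α1, β0+β1), (α1+α0, α1+β0), (β1+α0, β1+β0), at least one member is not a root of Φ. -/

import Mathlib

/-- A reduced root system in a finite-dimensional real vector space `V`, given with a choice of
coroots: `coroot α` is the linear form `⟨·, α^∨⟩`. -/
structure RootSystemData (V : Type*) [AddCommGroup V] [Module ℝ V] where
  /-- the set of roots -/
  Φ : Set V
  finite : Φ.Finite
  span_eq : Submodule.span ℝ Φ = ⊤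
  zero_not_mem : (0 : V) ∉ Φ
  neg_mem : ∀ α ∈ Φ, -α ∈ Φ
  reduced : ∀ α ∈ Φ, ∀ c : ℝ, c • α ∈ Φ → c = 1 ∨ c = -1
  /-- the coroot `α^∨`, viewed as the linear form `⟨·, α^∨⟩` on `V` -/
  coroot : V → (V →ₗ[ℝ] ℝ)
  coroot_self : ∀ α ∈ Φ, coroot α α = 2
  reflect_mem : ∀ α ∈ Φ, ∀ β ∈ Φ, β - coroot α β • α ∈ Φ
  integral : ∀ α ∈ Φ, ∀ β ∈ Φ, ∃ n : ℤ, coroot α β = (n : ℝ)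

namespace RSAux

variable {V : Type*} [AddCommGroup V] [Module ℝ V] (P : RootSystemData V)

lemma root_ne_zero {α : V} (hα : α ∈ P.Φ) : α ≠ 0 :=
  fun h => P.zero_not_mem (h ▸ hα)

lemma two_smul_not_mem {α : V} (hα : α ∈ P.Φ) : (2:ℝ) • α ∉ P.Φ := by
  intro h
  rcases P.reduced α hα 2 h with h | h <;> norm_num at h

/-- The unipotent trick: if `x₀ + n • w ∈ Φ` for all naturals `n`, then `w = 0`. -/
lemma eq_zero_of_forall_add_nsmul_mem (x₀ w : V)
    (h : ∀ n : ℕ, x₀ + (n : ℝ) • w ∈ P.Φ) : w = 0 := by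
  by_contra hw
  have hinj : Function.Injective (fun n : ℕ => x₀ + (n : ℝ) • w) := by
    intro m n hmn
    simp only [add_right_injective] at hmn
    have : ((m : ℝ) - n) • w = 0 := by
      rw [sub_smul]
      rw [add_left_cancel_iff] at hmn
      rw [hmn]; abel
    rcases smul_eq_zero.1 this with h0 | h0
    · have : (m : ℝ) = n := by linarith [sub_eq_zero.1 h0]
      exact_mod_cast this
    · exact absurd h0 hw
  exact (Set.infinite_of_injective_forall_mem hinj h) P.finite

/-- Uniqueness of the coroot. -/
lemma coroot_unique {δ : V} (hδ : δ ∈ P.Φ) (f : V →ₗ[ℝ] ℝ) (hf2 : f δ = 2)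
    (hf : ∀ x ∈ P.Φ, x - f x • δ ∈ P.Φ) : ∀ x, P.coroot δ x = f x := by
  set g := P.coroot δ with hg
  have key : ∀ x ∈ P.Φ, ∀ n : ℕ, x + (n : ℝ) • ((g x - f x) • δ) ∈ P.Φ := by
    intro x hx n
    induction n with
    | zero => simpa using hx
    | succ n ih =>
      set c : ℝ := g x - f x with hc
      set y : V := x + (n : ℝ) • (c • δ) with hy
      have hyΦ : y ∈ P.Φ := ih
      have h1 : y - g y • δ ∈ P.Φ := P.reflect_mem δ hδ y hyΦ
      have h2 : (y - g y • δ) - f (y - g y • δ) • δ ∈ P.Φ := hf _ h1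
      have hgy : g y = g x + (n : ℝ) * c * 2 := by
        simp [hy, map_add, map_smul, hg, P.coroot_self δ hδ, smul_eq_mul]; ring
      have hfy : f y = f x + (n : ℝ) * c * 2 := by
        simp [hy, map_add, map_smul, hf2, smul_eq_mul]; ring
      have heq : (y - g y • δ) - f (y - g y • δ) • δ = x + ((n : ℕ) + 1 : ℝ) • (c • δ) := by
        have : f (y - g y • δ) = f y - g y * 2 := by
          simp [map_sub, map_smul, hf2, smul_eq_mul]
        rw [this, hgy, hfy, hy]
        module
      rw [heq] at h2
      convert h2 using 3
      push_cast; ring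
  have hΦ : ∀ x ∈ P.Φ, g x = f x := by
    intro x hx
    have := eq_zero_of_forall_add_nsmul_mem P x ((g x - f x) • δ) (key x hx)
    rcases smul_eq_zero.1 this with h0 | h0
    · linarith [sub_eq_zero.1 (by linarith [h0] : g x - f x = 0)]
    · exact absurd h0 (root_ne_zero P hδ)
  have : g = f := LinearMap.ext_on P.span_eq hΦ
  exact fun x => by rw [this]


/-- reflection in α, as a function -/
def refl (α : V) (x : V) : V := x - P.coroot α x • α

lemma refl_mem {α x : V} (hα : α ∈ P.Φ) (hx : x ∈ P.Φ) : refl P α x ∈ P.Φ :=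
  P.reflect_mem α hα x hx

lemma refl_refl {α : V} (hα : α ∈ P.Φ) (x : V) : refl P α (refl P α x) = x := by
  simp only [refl, map_sub, map_smul, P.coroot_self α hα, smul_eq_mul]
  module

lemma coroot_reflect {α δ : V} (hα : α ∈ P.Φ) (hδ : δ ∈ P.Φ) (x : V) :
    P.coroot (refl P α δ) x = P.coroot δ (refl P α x) := by
  have hδ' : refl P α δ ∈ P.Φ := refl_mem P hα hδ
  set S : V →ₗ[ℝ] V := LinearMap.id - (P.coroot α).smulRight α with hS
  have hSx : ∀ y, S y = refl P α y := by intro y; simp [hS, refl]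
  have hf := coroot_unique P hδ' ((P.coroot δ).comp S) ?_ ?_
  · have := hf x
    simpa [hSx] using this
  · simp only [LinearMap.comp_apply, hSx]
    rw [show refl P α (refl P α δ) = δ from refl_refl P hα δ]
    exact P.coroot_self δ hδ
  · intro x hx
    have h1 : refl P α x ∈ P.Φ := refl_mem P hα hx
    have h2 : refl P δ (refl P α x) ∈ P.Φ := refl_mem P hδ h1
    have h3 : refl P α (refl P δ (refl P α x)) ∈ P.Φ := refl_mem P hα h2
    have heq : refl P α (refl P δ (refl P α x)) =
        x - ((P.coroot δ).comp S) x • refl P α δ := by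
      simp only [LinearMap.comp_apply, hSx]
      simp only [refl, map_sub, map_smul, P.coroot_self α hα, smul_eq_mul, map_sub, smul_sub,
        sub_smul, mul_smul]
      module
    rwa [heq] at h3

/-- The auxiliary positive semidefinite invariant form. -/
noncomputable def B (x y : V) : ℝ := ∑ δ ∈ P.finite.toFinset, P.coroot δ x * P.coroot δ y

lemma B_symm (x y : V) : B P x y = B P y x := by
  unfold B; exact Finset.sum_congr rfl fun δ _ => mul_comm _ _

lemma B_add_left (x y z : V) : B P (x + y) z = B P x z + B P y z := by
  unfold B; rw [← Finset.sum_add_distrib]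
  exact Finset.sum_congr rfl fun δ _ => by rw [map_add]; ring

lemma B_add_right (x y z : V) : B P x (y + z) = B P x y + B P x z := by
  rw [B_symm, B_add_left, B_symm P x y, B_symm P x z]

lemma B_sub_left (x y z : V) : B P (x - y) z = B P x z - B P y z := by
  unfold B; rw [← Finset.sum_sub_distrib]
  exact Finset.sum_congr rfl fun δ _ => by rw [map_sub]; ring

lemma B_sub_right (x y z : V) : B P x (y - z) = B P x y - B P x z := by
  rw [B_symm, B_sub_left, B_symm P y x, B_symm P z x]

lemma B_smul_left (c : ℝ) (x z : V) : B P (c • x) z = c * B P x z := by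
  unfold B; rw [Finset.mul_sum]
  exact Finset.sum_congr rfl fun δ _ => by rw [map_smul]; simp [smul_eq_mul]; ring

lemma B_smul_right (c : ℝ) (x z : V) : B P x (c • z) = c * B P x z := by
  rw [B_symm, B_smul_left, B_symm P z x]

lemma B_self_nonneg (x : V) : 0 ≤ B P x x :=
  Finset.sum_nonneg fun δ _ => mul_self_nonneg _

lemma four_le_B_self {α : V} (hα : α ∈ P.Φ) : 4 ≤ B P α α := by
  have hmem : α ∈ P.finite.toFinset := P.finite.mem_toFinset.2 hα
  have h := Finset.single_le_sum (f := fun δ => P.coroot δ α * P.coroot δ α)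
    (fun δ _ => mul_self_nonneg _) hmem
  simp only [P.coroot_self α hα] at h
  unfold B; linarith

lemma B_self_pos {α : V} (hα : α ∈ P.Φ) : 0 < B P α α := by
  linarith [four_le_B_self P hα]

lemma B_invariant {α : V} (hα : α ∈ P.Φ) (x y : V) :
    B P (refl P α x) (refl P α y) = B P x y := by
  unfold B
  refine Finset.sum_nbij' (fun δ => refl P α δ) (fun δ => refl P α δ) ?_ ?_ ?_ ?_ ?_
  · intro δ hδ
    exact P.finite.mem_toFinset.2 (refl_mem P hα (P.finite.mem_toFinset.1 hδ))
  · intro δ hδ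
    exact P.finite.mem_toFinset.2 (refl_mem P hα (P.finite.mem_toFinset.1 hδ))
  · intro δ _; exact refl_refl P hα δ
  · intro δ _; exact refl_refl P hα δ
  · intro δ hδ
    rw [coroot_reflect P hα (P.finite.mem_toFinset.1 hδ) x,
        coroot_reflect P hα (P.finite.mem_toFinset.1 hδ) y]

/-- The bridge between coroots and the invariant form. -/
lemma bridge {α : V} (hα : α ∈ P.Φ) (x : V) :
    P.coroot α x * B P α α = 2 * B P x α := by
  have h := B_invariant P hα x α
  have hra : refl P α α = -α := by
    simp [refl, P.coroot_self α hα]; module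
  rw [hra] at h
  have : B P (refl P α x) (-α) = -(B P x α) + P.coroot α x * B P α α := by
    have hneg : B P (refl P α x) (-α) = - B P (refl P α x) α := by
      rw [show (-α : V) = (0:V) - α by abel, B_sub_right]
      simp [B, map_zero]
    rw [hneg]
    simp only [refl, B_sub_left, B_smul_left]
    ring
  rw [this] at h
  linarith


/-- If `β` pairs with every coroot like `c • α` does, then `β = c • α`. -/
lemma prop_of_radical {α β : V} (hα : α ∈ P.Φ) (hβ : β ∈ P.Φ) (c : ℝ) (hc : c ≠ 0)
    (h : ∀ δ ∈ P.Φ, P.coroot δ β = c * P.coroot δ α) : β = c • α := by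
  set w : V := β - c • α with hw
  have hδw : ∀ δ ∈ P.Φ, P.coroot δ w = 0 := by
    intro δ hδ
    simp [hw, map_sub, map_smul, h δ hδ, smul_eq_mul]
  -- B x β = c * B x α for all x
  have hBxβ : ∀ x : V, B P x β = c * B P x α := by
    intro x
    unfold B
    rw [Finset.mul_sum]
    refine Finset.sum_congr rfl fun δ hδ => ?_
    rw [h δ (P.finite.mem_toFinset.1 hδ)]; ring
  have hBββ : B P β β = c^2 * B P α α := by
    rw [hBxβ β, B_symm P β α, hBxβ α, B_symm P α α]; ring
  -- coroot β x * c = coroot α x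
  have hcorβ : ∀ x : V, P.coroot β x * c = P.coroot α x := by
    intro x
    have h1 := bridge P hβ x
    have h2 := bridge P hα x
    rw [hBββ, hBxβ x] at h1
    have hBαα := B_self_pos P hα
    have : P.coroot β x * (c^2 * B P α α) = c * (P.coroot α x * B P α α) := by
      rw [h1, h2]; ring
    have h3 : (P.coroot β x * c - P.coroot α x) * (c * B P α α) = 0 := by ring_nf; nlinarith [this]
    rcases mul_eq_zero.1 h3 with h4 | h4
    · linarith
    · rcases mul_eq_zero.1 h4 with h5 | h5
      · exact absurd h5 hc
      · linarith
  have hαw : P.coroot α w = 0 := hδw α hα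
  have hβeq : β = c • α + w := by rw [hw]; abel
  -- iterate T = s_β ∘ s_α
  have key : ∀ n : ℕ, α + (n : ℝ) • ((2/c) • w) ∈ P.Φ := by
    intro n
    induction n with
    | zero => simpa using hα
    | succ n ih =>
      set y : V := α + (n : ℝ) • ((2/c) • w) with hy
      have hαy : P.coroot α y = 2 := by
        simp [hy, map_add, map_smul, P.coroot_self α hα, hαw, smul_eq_mul]
      have h1 : y - P.coroot α y • α ∈ P.Φ := P.reflect_mem α hα y ih
      set z1 : V := y - P.coroot α y • α with hz1
      have h2 : z1 - P.coroot β z1 • β ∈ P.Φ := P.reflect_mem β hβ z1 h1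
      have hβz1 : P.coroot β z1 * c = -2 := by
        rw [hcorβ z1, hz1, hαy]
        simp [map_sub, map_smul, hαy, P.coroot_self α hα, smul_eq_mul]
        norm_num
      have hβz1' : P.coroot β z1 = -2/c := by
        field_simp at hβz1 ⊢
        linarith
      have heq : z1 - P.coroot β z1 • β = α + ((n:ℕ) + 1 : ℝ) • ((2/c) • w) := by
        rw [hβz1', hz1, hαy, hβeq, hy]
        rw [smul_add (-2/c), smul_smul (-2/c) c, show (-2/c) * c = -2 by field_simp]
        module
      rw [heq] at h2
      convert h2 using 3
      push_cast; ring
  have := eq_zero_of_forall_add_nsmul_mem P α ((2/c) • w) key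
  rcases smul_eq_zero.1 this with h0 | h0
  · exfalso; apply hc; field_simp at h0; norm_num at h0
  · rw [hw] at h0
    exact sub_eq_zero.1 h0

/-- Cauchy–Schwarz equality case: failure of the strict inequality forces proportionality. -/
lemma prop_of_CS {α β : V} (hα : α ∈ P.Φ) (hβ : β ∈ P.Φ)
    (h : B P α α * B P β β ≤ B P α β ^ 2) : β = α ∨ β = -α := by
  have hαα := B_self_pos P hα
  have hββ := B_self_pos P hβ
  have hαα4 := four_le_B_self P hα
  have hββ4 := four_le_B_self P hβ
  set z : V := (B P α α) • β - (B P α β) • α with hz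
  have hBzz : B P z z = B P α α * (B P α α * B P β β - B P α β ^ 2) := by
    rw [hz]
    simp only [B_sub_left, B_sub_right, B_smul_left, B_smul_right]
    rw [B_symm P β α]
    ring
  have hBzz0 : B P z z = 0 := by
    have h1 : B P z z ≤ 0 := by rw [hBzz]; nlinarith
    linarith [B_self_nonneg P z]
  -- each coroot vanishes on z
  have hδz : ∀ δ ∈ P.Φ, P.coroot δ z = 0 := by
    intro δ hδ
    have hsum : ∑ γ ∈ P.finite.toFinset, P.coroot γ z * P.coroot γ z = 0 := hBzz0
    have := (Finset.sum_eq_zero_iff_of_nonneg (fun γ _ => mul_self_nonneg (P.coroot γ z))).1 hsum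
      δ (P.finite.mem_toFinset.2 hδ)
    exact mul_self_eq_zero.1 this
  have hc0 : B P α β ≠ 0 := by
    intro h0
    rw [h0] at h
    nlinarith
  have hprop : β = (B P α β / B P α α) • α := by
    apply prop_of_radical P hα hβ _ (div_ne_zero hc0 hαα.ne')
    intro δ hδ
    have := hδz δ hδ
    rw [hz, map_sub, map_smul, map_smul, smul_eq_mul, smul_eq_mul] at this
    field_simp
    linarith
  rcases P.reduced α hα _ (hprop ▸ hβ) with h1 | h1
  · left; rw [hprop, h1, one_smul]
  · right; rw [hprop, h1, neg_one_smul]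

/-- Product of pairings is at most 3 for non-proportional roots. -/
lemma prod_le_three {α β : V} (hα : α ∈ P.Φ) (hβ : β ∈ P.Φ)
    (h1 : β ≠ α) (h2 : β ≠ -α) : P.coroot α β * P.coroot β α ≤ 3 := by
  by_contra hgt
  push_neg at hgt
  obtain ⟨m, hm⟩ := P.integral α hα β hβ
  obtain ⟨n, hn⟩ := P.integral β hβ α hα
  rw [hm, hn] at hgt
  have hmn : 4 ≤ m * n := by
    have h3 : (3:ℝ) < ((m * n : ℤ) : ℝ) := by push_cast; linarith
    have h3' : (3:ℤ) < m * n := by exact_mod_cast h3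
    omega
  have hb1 := bridge P hα β
  have hb2 := bridge P hβ α
  rw [hm] at hb1; rw [hn] at hb2
  rw [← B_symm P α β] at hb1
  have hαα := B_self_pos P hα
  have hββ := B_self_pos P hβ
  have hineq : B P α α * B P β β ≤ B P α β ^ 2 := by
    have h12 : ((m:ℝ) * B P α α) * ((n:ℝ) * B P β β) = (2 * B P α β) * (2 * B P α β) := by
      rw [hb1, hb2]
    have hprod : (m:ℝ) * n * (B P α α * B P β β) = 4 * B P α β ^ 2 := by
      linear_combination h12
    have h4 : (4:ℝ) ≤ (m:ℝ) * n := by exact_mod_cast hmn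
    nlinarith [mul_pos hαα hββ]
  rcases prop_of_CS P hα hβ hineq with h | h
  · exact h1 h
  · exact h2 h

/-- Classification of pairings for roots whose sum is a root. -/
lemma sum_pair {a c : V} (ha : a ∈ P.Φ) (hc : c ∈ P.Φ) (hs : a + c ∈ P.Φ) :
    (P.coroot a c = 1 ∧ P.coroot c a = 1) ∨ (P.coroot a c ≤ 0 ∧ P.coroot c a ≤ 0) := by
  have hne : c ≠ a := by
    rintro rfl
    exact two_smul_not_mem P hc (by convert hs using 1; module)
  have hnen : c ≠ -a := by
    rintro rfl
    exact P.zero_not_mem (by convert hs using 1; module)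
  have hρ : a + c ∈ P.Φ := hs
  have hb1 := bridge P ha c
  have hb2 := bridge P hc a
  have hαα := B_self_pos P ha
  have hββ := B_self_pos P hc
  rcases le_or_gt (B P a c) 0 with hle | hpos
  · right
    constructor
    · nlinarith [hb1, B_symm P c a]
    · nlinarith [hb2, B_symm P a c]
  · -- positive inner product case
    left
    obtain ⟨m, hm⟩ := P.integral a ha c hc
    obtain ⟨n, hn⟩ := P.integral c hc a ha
    have hm1 : 1 ≤ m := by
      have : (0:ℝ) < (m:ℝ) := by nlinarith [hb1, B_symm P c a]
      have h0 : (0:ℤ) < m := by exact_mod_cast this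
      omega
    have hn1 : 1 ≤ n := by
      have : (0:ℝ) < (n:ℝ) := by nlinarith [hb2, B_symm P a c]
      have h0 : (0:ℤ) < n := by exact_mod_cast this
      omega
    -- pair (a, a+c)
    have hρa : a + c ≠ a := fun h => root_ne_zero P hc (by
      have : c = 0 := by
        have := h; nth_rewrite 2 [show a = a + 0 by abel] at this
        exact add_left_cancel this
      exact this)
    have hρna : a + c ≠ -a := by
      intro h
      have : c = (-2:ℝ) • a := by
        rw [show ((-2:ℝ) • a) = -a - a by module, ← h]; abel
      rw [this] at hc
      rcases P.reduced a ha (-2) hc with h' | h' <;> norm_num at h'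
    have haρ : P.coroot a (a + c) = 2 + (m:ℝ) := by
      rw [map_add, P.coroot_self a ha, hm]
    have hbρ := bridge P hρ a
    obtain ⟨k, hk⟩ := P.integral (a+c) hρ a ha
    have hBaρ : B P a (a + c) = B P a a + B P a c := B_add_right P a a c
    have hk1 : 1 ≤ k := by
      have : (0:ℝ) < (k:ℝ) := by
        rw [← hk]
        have hρρ := B_self_pos P hρ
        nlinarith [hbρ, hk, B_symm P a (a+c), hBaρ]
      have h0 : (0:ℤ) < k := by exact_mod_cast this
      omega
    have hpl := prod_le_three P ha hρ hρa hρna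
    rw [haρ, hk] at hpl
    have hm1' : m = 1 := by
      have : ((2 + (m:ℝ)) * k ≤ 3) := hpl
      have h2 : (2 + m) * k ≤ 3 := by exact_mod_cast this
      nlinarith [hm1, hk1, h2]
    -- symmetric for n
    have hρc : a + c ≠ c := fun h => root_ne_zero P ha (by
      have : a = 0 := by
        have := h; nth_rewrite 2 [show c = 0 + c by abel] at this
        exact add_right_cancel this
      exact this)
    have hρnc : a + c ≠ -c := by
      intro h
      have : a = (-2:ℝ) • c := by
        rw [show ((-2:ℝ) • c) = -c - c by module, ← h]; abel
      rw [this] at ha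
      rcases P.reduced c hc (-2) ha with h' | h' <;> norm_num at h'
    have hcρ : P.coroot c (a + c) = 2 + (n:ℝ) := by
      rw [map_add, P.coroot_self c hc, hn]; ring
    obtain ⟨k', hk'⟩ := P.integral (a+c) hρ c hc
    have hk'1 : 1 ≤ k' := by
      have : (0:ℝ) < (k':ℝ) := by
        rw [← hk']
        have hρρ := B_self_pos P hρ
        have hbρ' := bridge P hρ c
        have hBcρ : B P c (a + c) = B P a c + B P c c := by
          rw [B_add_right P c a c, B_symm P c a]
        nlinarith [hbρ', hk', B_symm P c (a+c), hBcρ]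
      have h0 : (0:ℤ) < k' := by exact_mod_cast this
      omega
    have hpl' := prod_le_three P hc hρ hρc hρnc
    rw [hcρ, hk'] at hpl'
    have hn1' : n = 1 := by
      have h2 : (2 + n) * k' ≤ 3 := by exact_mod_cast hpl'
      nlinarith [hn1, hk'1, h2]
    rw [hm, hn, hm1', hn1']
    norm_num

lemma int_cancel {p q : ℤ} {a : ℝ} (ha : 0 < a) (h : (p:ℝ) * a = (q:ℝ) * a) : p = q := by
  exact_mod_cast mul_right_cancel₀ ha.ne' h

lemma ne_and_ne_neg_of_sum_root {a c : V} (ha : a ∈ P.Φ) (hc : c ∈ P.Φ) (hs : a + c ∈ P.Φ) :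
    c ≠ a ∧ c ≠ -a := by
  constructor
  · rintro rfl
    exact two_smul_not_mem P hc (by convert hs using 1; module)
  · rintro rfl
    exact P.zero_not_mem (by convert hs using 1; module)

/-- All the combinatorial data of a pair of roots whose sum is a root. -/
lemma pair_data {a c : V} (ha : a ∈ P.Φ) (hc : c ∈ P.Φ) (hs : a + c ∈ P.Φ) :
    ∃ m n : ℤ, P.coroot a c = (m:ℝ) ∧ P.coroot c a = (n:ℝ) ∧
      ((m = 1 ∧ n = 1) ∨ (m ≤ 0 ∧ n ≤ 0)) ∧ m * n ≤ 3 ∧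
      (m < 0 → n < 0) ∧ (n < 0 → m < 0) ∧ (-3:ℤ) ≤ m ∧ (-3:ℤ) ≤ n := by
  obtain ⟨hne, hnen⟩ := ne_and_ne_neg_of_sum_root P ha hc hs
  obtain ⟨m, hm⟩ := P.integral a ha c hc
  obtain ⟨n, hn⟩ := P.integral c hc a ha
  have hb1 := bridge P ha c
  have hb2 := bridge P hc a
  rw [hm, ← B_symm P a c] at hb1
  rw [hn] at hb2
  have haa := B_self_pos P ha
  have hcc := B_self_pos P hc
  have hsp : (m = 1 ∧ n = 1) ∨ (m ≤ 0 ∧ n ≤ 0) := by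
    rcases sum_pair P ha hc hs with ⟨h1, h2⟩ | ⟨h1, h2⟩
    · left
      rw [hm] at h1; rw [hn] at h2
      exact ⟨by exact_mod_cast h1, by exact_mod_cast h2⟩
    · right
      rw [hm] at h1; rw [hn] at h2
      exact ⟨by exact_mod_cast h1, by exact_mod_cast h2⟩
  have hprod : m * n ≤ 3 := by
    have := prod_le_three P ha hc hne hnen
    rw [hm, hn] at this
    exact_mod_cast this
  have hmn : ∀ p q : ℤ, ∀ A C : ℝ, 0 < A → 0 < C → (p:ℝ) * A = 2 * B P a c →
      (q:ℝ) * C = 2 * B P a c → p < 0 → q < 0 := by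
    intro p q A C hA hC hp hq hplt
    have h1 : (p:ℝ) < 0 := by exact_mod_cast hplt
    have h2 : B P a c < 0 := by nlinarith
    have h3 : (q:ℝ) < 0 := by nlinarith
    exact_mod_cast h3
  refine ⟨m, n, hm, hn, hsp, hprod, hmn m n _ _ haa hcc hb1 hb2, hmn n m _ _ hcc haa hb2 hb1,
    ?_, ?_⟩
  · by_contra hlt
    push_neg at hlt
    have hn0 : n < 0 := hmn m n _ _ haa hcc hb1 hb2 (by omega)
    nlinarith [hprod]
  · by_contra hlt
    push_neg at hlt
    have hm0 : m < 0 := hmn n m _ _ hcc haa hb2 hb1 (by omega)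
    nlinarith [hprod]

set_option maxHeartbeats 1000000 in
lemma lemM_core {u v w : V} (hu : u ∈ P.Φ) (hv : v ∈ P.Φ) (hw : w ∈ P.Φ)
    (hx : u + v ∈ P.Φ) (hy : u + w ∈ P.Φ) (hq : v + w ∈ P.Φ) (hb : v + w - u ∈ P.Φ)
    (hord : P.coroot u w ≤ P.coroot u v) : False := by
  have hU0 := B_self_pos P hu
  have hU4 := four_le_B_self P hu
  have hV4 := four_le_B_self P hv
  have hW4 := four_le_B_self P hw
  have hs1 : B P v u = B P u v := B_symm P v u
  have hs2 : B P w u = B P u w := B_symm P w u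
  have hs3 : B P w v = B P v w := B_symm P w v
  -- expansions
  have hBqq : B P (v+w) (v+w) = B P v v + 2 * B P v w + B P w w := by
    simp only [B_add_left, B_add_right, hs3]; ring
  have hBuq : B P u (v+w) = B P u v + B P u w := B_add_right P u v w
  have hBbb : B P (v+w-u) (v+w-u) =
      B P v v + 2 * B P v w + B P w w + B P u u - 2 * B P u v - 2 * B P u w := by
    simp only [B_add_left, B_add_right, B_sub_left, B_sub_right, hs1, hs2, hs3]; ring
  have hBub : B P u (v+w-u) = B P u v + B P u w - B P u u := by
    simp only [B_add_right, B_sub_right]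
  have hBxx : B P (u+v) (u+v) = B P u u + 2 * B P u v + B P v v := by
    simp only [B_add_left, B_add_right, hs1]; ring
  have hBux : B P u (u+v) = B P u u + B P u v := B_add_right P u u v
  have hBwx : B P w (u+v) = B P u w + B P v w := by
    simp only [B_add_right, hs2, hs3]
  have hBqx : B P (v+w) (u+v) = B P u v + B P v v + B P u w + B P v w := by
    simp only [B_add_left, B_add_right, hs1, hs2, hs3]; ring
  have hByy : B P (u+w) (u+w) = B P u u + 2 * B P u w + B P w w := by
    simp only [B_add_left, B_add_right, hs2]; ring
  have hBuy : B P u (u+w) = B P u u + B P u w := B_add_right P u u w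
  have hBvb : B P v (v+w-u) = B P v v + B P v w - B P u v := by
    simp only [B_add_right, B_sub_right, hs1]
  -- pair data
  obtain ⟨m1, n1, hm1, hn1, P1, pr1, s1, s1', lb1, lb1'⟩ := pair_data P hu hv hx
  obtain ⟨m2, n2, hm2, hn2, P2, pr2, s2, s2', lb2, lb2'⟩ := pair_data P hu hw hy
  obtain ⟨m3, n3, hm3, hn3, P3, pr3, s3, s3', lb3, lb3'⟩ := pair_data P hv hw hq
  have hub : u + (v + w - u) ∈ P.Φ := by rw [show u + (v + w - u) = v + w by abel]; exact hq
  obtain ⟨m4, n4, hm4, hn4, P4, pr4, s4, s4', lb4, lb4'⟩ := pair_data P hu hb hub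
  have hm4eq : m4 = m1 + m2 - 2 := by
    have h0 : P.coroot u (v + w - u) = (m1:ℝ) + m2 - 2 := by
      rw [map_sub, map_add, hm1, hm2, P.coroot_self u hu]
    rw [hm4] at h0
    exact_mod_cast h0
  -- bridges
  have e1 := bridge P hu v; rw [hm1, hs1] at e1
  have f1 := bridge P hv u; rw [hn1] at f1
  have e2 := bridge P hu w; rw [hm2, hs2] at e2
  have f2 := bridge P hw u; rw [hn2] at f2
  have e3 := bridge P hv w; rw [hm3, hs3] at e3
  have f3 := bridge P hw v; rw [hn3] at f3
  obtain ⟨k1, hk1c⟩ := P.integral (v+w) hq u hu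
  have hk1 := bridge P hq u
  rw [hk1c, hBuq] at hk1
  have hn4b := bridge P hb u
  rw [hn4, hBub] at hn4b
  -- ne facts
  have hqu : v + w ≠ u := by
    intro h
    have h0 : v + w - u = 0 := by rw [h]; exact sub_self u
    exact P.zero_not_mem (h0 ▸ hb)
  have hqnu : v + w ≠ -u := by
    intro h
    have h0 : v + w - u = (-2:ℝ) • u := by rw [h]; module
    rw [h0] at hb
    rcases P.reduced u hu (-2) hb with h' | h' <;> norm_num at h'
  have hxu : u + v ≠ u := by
    intro h
    apply root_ne_zero P hv
    have h0 : v = u + v - u := by abel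
    rw [h0, h, sub_self]
  have hxnu : u + v ≠ -u := by
    intro h
    have h0 : v = (-2:ℝ) • u := by rw [show v = (u + v) - u by abel, h]; module
    rw [h0] at hv
    rcases P.reduced u hu (-2) hv with h' | h' <;> norm_num at h'
  have hyu : u + w ≠ u := by
    intro h
    apply root_ne_zero P hw
    have h0 : w = u + w - u := by abel
    rw [h0, h, sub_self]
  have hynu : u + w ≠ -u := by
    intro h
    have h0 : w = (-2:ℝ) • u := by rw [show w = (u + w) - u by abel, h]; module
    rw [h0] at hw
    rcases P.reduced u hu (-2) hw with h' | h' <;> norm_num at h'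
  -- coroot linear identities
  have hcuq : P.coroot u (v + w) = (m1:ℝ) + m2 := by rw [map_add, hm1, hm2]
  have hcux : P.coroot u (u + v) = 2 + (m1:ℝ) := by rw [map_add, hm1, P.coroot_self u hu]
  have hcuy : P.coroot u (u + w) = 2 + (m2:ℝ) := by rw [map_add, hm2, P.coroot_self u hu]
  -- integer bounds
  have hm1le : m1 ≤ 1 := by rcases P1 with ⟨h, _⟩ | ⟨h, _⟩ <;> omega
  have hm2le : m2 ≤ 1 := by rcases P2 with ⟨h, _⟩ | ⟨h, _⟩ <;> omega
  have hm3le : m3 ≤ 1 := by rcases P3 with ⟨h, _⟩ | ⟨h, _⟩ <;> omega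
  have hm12le : m1 + m2 ≤ 2 := by
    rcases P4 with ⟨h, _⟩ | ⟨h, _⟩ <;> omega
  have hm12ge : -1 ≤ m1 + m2 := by omega
  have hordZ : m2 ≤ m1 := by
    rw [hm1, hm2] at hord
    exact_mod_cast hord
  have hcases : (m1 = 1 ∧ m2 = 1) ∨ (m1 = 1 ∧ m2 = 0) ∨ (m1 = 0 ∧ m2 = 0) ∨
      (m1 = 1 ∧ m2 = -1) ∨ (m1 = 0 ∧ m2 = -1) ∨ (m1 = 1 ∧ m2 = -2) := by omega
  rcases hcases with ⟨hA, hB⟩ | ⟨hA, hB⟩ | ⟨hA, hB⟩ | ⟨hA, hB⟩ | ⟨hA, hB⟩ | ⟨hA, hB⟩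
  · -- case (1,1)
    have hn1' : n1 = 1 := by rcases P1 with ⟨_, h⟩ | ⟨h, _⟩ <;> omega
    have hn2' : n2 = 1 := by rcases P2 with ⟨_, h⟩ | ⟨h, _⟩ <;> omega
    rw [hA] at e1; push_cast at e1
    rw [hn1'] at f1; push_cast at f1
    rw [hB] at e2; push_cast at e2
    rw [hn2'] at f2; push_cast at f2
    have hVU : B P v v = B P u u := by linarith only [e1, f1]
    have hWU : B P w w = B P u u := by linarith only [e2, f2]
    rw [hVU] at e3
    rw [hWU] at f3
    have hm3n3 : m3 = n3 := int_cancel hU0 (by linarith only [e3, f3])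
    rw [← hm3n3] at pr3
    have hm3b1 : m3 ≤ 1 := by nlinarith only [pr3, sq_nonneg (m3 - 2)]
    have hm3b2 : -1 ≤ m3 := by nlinarith only [pr3, sq_nonneg (m3 + 2)]
    have hd : m3 = 1 ∨ m3 = 0 ∨ m3 = -1 := by omega
    rcases hd with h3 | h3 | h3
    · rw [h3] at e3; push_cast at e3
      have hQval : B P (v+w) (v+w) = 3 * B P u u := by
        rw [hBqq]; linarith only [e3, hVU, hWU]
      rw [hQval] at hk1
      have := int_cancel hU0 (p := 3 * k1) (q := 2)
        (by push_cast; linarith only [hk1, e1, e2])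
      omega
    · rw [h3] at e3; push_cast at e3
      obtain ⟨jxq, hjc⟩ := P.integral (u+v) hx (v+w) hq
      have hj := bridge P hx (v+w)
      have hXval : B P (u+v) (u+v) = 3 * B P u u := by
        rw [hBxx]; linarith only [e1, hVU]
      rw [hjc, hXval, hBqx] at hj
      have := int_cancel hU0 (p := 3 * jxq) (q := 4)
        (by push_cast; linarith only [hj, e1, e2, e3, hVU])
      omega
    · rw [h3] at e3; push_cast at e3
      have hQval : B P (v+w) (v+w) = B P u u := by
        rw [hBqq]; linarith only [e3, hVU, hWU]
      rw [hQval] at hk1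
      have hk12 : k1 = 2 := int_cancel hU0 (p := k1) (q := 2)
        (by push_cast; linarith only [hk1, e1, e2])
      have hple := prod_le_three P hu hq hqu hqnu
      rw [hcuq, hk1c] at hple
      rw [hA, hB, hk12] at hple
      norm_num at hple
  · -- case (1,0)
    have hn1' : n1 = 1 := by rcases P1 with ⟨_, h⟩ | ⟨h, _⟩ <;> omega
    rw [hA] at e1; push_cast at e1
    rw [hn1'] at f1; push_cast at f1
    rw [hB] at e2; push_cast at e2
    have hVU : B P v v = B P u u := by linarith only [e1, f1]
    have hBuw0 : B P u w = 0 := by linarith only [e2]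
    have hQ4 : (4:ℝ) ≤ B P (v+w) (v+w) := four_le_B_self P hq
    have hk1pos : 1 ≤ k1 := by
      have h0 : (0:ℝ) < (k1:ℝ) := by nlinarith only [hk1, hQ4, hU4, e1, hBuw0]
      have h1 : (0:ℤ) < k1 := by exact_mod_cast h0
      omega
    have hple := prod_le_three P hu hq hqu hqnu
    rw [hcuq, hk1c, hA, hB] at hple
    push_cast at hple
    have hk13 : k1 ≤ 3 := by
      have h01 : (k1:ℝ) ≤ 3 := by linarith only [hple]
      exact_mod_cast h01
    have hd : m3 = 1 ∨ m3 = 0 ∨ m3 = -1 ∨ m3 = -2 ∨ m3 = -3 := by omega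
    rcases hd with h3 | h3 | h3 | h3 | h3
    · have hn3' : n3 = 1 := by rcases P3 with ⟨_, h⟩ | ⟨h, _⟩ <;> omega
      rw [h3] at e3; push_cast at e3
      rw [hn3'] at f3; push_cast at f3
      have hQval : B P (v+w) (v+w) = 3 * B P u u := by
        rw [hBqq]; linarith only [e3, f3, hVU]
      rw [hQval] at hk1
      have := int_cancel hU0 (p := 3 * k1) (q := 1)
        (by push_cast; linarith only [hk1, e1, hBuw0])
      omega
    · rw [h3] at e3; push_cast at e3
      have hQval : B P (v+w) (v+w) = B P u u + B P w w := by
        rw [hBqq]; linarith only [e3, hVU]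
      rw [hQval] at hk1
      have h1 : (1:ℝ) ≤ (k1:ℝ) := by exact_mod_cast hk1pos
      have hprod : (0:ℝ) ≤ ((k1:ℝ) - 1) * (B P u u + B P w w) :=
        mul_nonneg (by linarith only [h1]) (by linarith only [hU4, hW4])
      linarith only [hk1, hprod, e1, hBuw0, hW4]
    · rw [h3] at e3; push_cast at e3
      have hn3neg : n3 < 0 := s3 (by omega)
      have hd2 : n3 = -1 ∨ n3 = -2 ∨ n3 = -3 := by omega
      rcases hd2 with h4 | h4 | h4
      · rw [h4] at f3; push_cast at f3
        obtain ⟨jxw, hjc⟩ := P.integral (u+v) hx w hw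
        have hj := bridge P hx w
        have hXval : B P (u+v) (u+v) = 3 * B P u u := by
          rw [hBxx]; linarith only [e1, hVU]
        rw [hjc, hXval, hBwx] at hj
        have := int_cancel hU0 (p := 3 * jxw) (q := -1)
          (by push_cast; linarith only [hj, hBuw0, e3, hVU])
        omega
      · rw [h4] at f3; push_cast at f3
        obtain ⟨jyu, hjc⟩ := P.integral (u+w) hy u hu
        have hj := bridge P hy u
        have hYval : B P (u+w) (u+w) = 3/2 * B P u u := by
          rw [hByy]; linarith only [f3, e3, hVU, hBuw0]
        rw [hjc, hYval, hBuy] at hj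
        have := int_cancel hU0 (p := 3 * jyu) (q := 4)
          (by push_cast; linarith only [hj, hBuw0])
        omega
      · rw [h4] at f3; push_cast at f3
        obtain ⟨jyu, hjc⟩ := P.integral (u+w) hy u hu
        have hj := bridge P hy u
        have hYval : B P (u+w) (u+w) = 4/3 * B P u u := by
          rw [hByy]; linarith only [f3, e3, hVU, hBuw0]
        rw [hjc, hYval, hBuy] at hj
        have := int_cancel hU0 (p := 4 * jyu) (q := 6)
          (by push_cast; linarith only [hj, hBuw0])
        omega
    · have hn3neg : n3 < 0 := s3 (by omega)
      have hn3' : n3 = -1 := by rw [h3] at pr3; omega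
      rw [h3] at e3; push_cast at e3
      rw [hn3'] at f3; push_cast at f3
      have hWU : B P w w = 2 * B P u u := by linarith only [e3, f3, hVU]
      obtain ⟨jyu, hjc⟩ := P.integral (u+w) hy u hu
      have hj := bridge P hy u
      have hYval : B P (u+w) (u+w) = 3 * B P u u := by
        rw [hByy]; linarith only [hWU, hBuw0]
      rw [hjc, hYval, hBuy] at hj
      have := int_cancel hU0 (p := 3 * jyu) (q := 2)
        (by push_cast; linarith only [hj, hBuw0])
      omega
    · have hn3neg : n3 < 0 := s3 (by omega)
      have hn3' : n3 = -1 := by rw [h3] at pr3; omega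
      rw [h3] at e3; push_cast at e3
      rw [hn3'] at f3; push_cast at f3
      have hWU : B P w w = 3 * B P u u := by linarith only [e3, f3, hVU]
      obtain ⟨jyu, hjc⟩ := P.integral (u+w) hy u hu
      have hj := bridge P hy u
      have hYval : B P (u+w) (u+w) = 4 * B P u u := by
        rw [hByy]; linarith only [hWU, hBuw0]
      rw [hjc, hYval, hBuy] at hj
      have := int_cancel hU0 (p := 4 * jyu) (q := 2)
        (by push_cast; linarith only [hj, hBuw0])
      omega
  · -- case (0,0)
    rw [hA] at e1; push_cast at e1
    rw [hB] at e2; push_cast at e2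
    have hBuv0 : B P u v = 0 := by linarith only [e1]
    have hBuw0 : B P u w = 0 := by linarith only [e2]
    have hm4' : m4 = -2 := by omega
    have hn4neg : n4 < 0 := s4 (by omega)
    have hn4' : n4 = -1 := by rw [hm4'] at pr4; omega
    rw [hn4', hBbb] at hn4b; push_cast at hn4b
    obtain ⟨jxu, hjuc⟩ := P.integral (u+v) hx u hu
    have hju := bridge P hx u
    rw [hjuc, hBxx, hBux] at hju
    have hX4 : (4:ℝ) ≤ B P (u+v) (u+v) := four_le_B_self P hx
    rw [hBxx] at hX4
    have hjxu1 : jxu = 1 := by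
      have h0 : (0:ℝ) < (jxu:ℝ) := by nlinarith only [hju, hX4, hU4, hBuv0]
      have h1 : (0:ℤ) < jxu := by exact_mod_cast h0
      have hple := prod_le_three P hu hx hxu hxnu
      rw [hcux, hjuc, hA] at hple
      push_cast at hple
      have h2 : 2 * jxu ≤ 3 := by exact_mod_cast (by linarith only [hple] : (2:ℝ) * jxu ≤ 3)
      omega
    rw [hjxu1] at hju; push_cast at hju
    have hVU : B P v v = B P u u := by linarith only [hju, hBuv0]
    obtain ⟨jyu, hjyc⟩ := P.integral (u+w) hy u hu
    have hjy := bridge P hy u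
    rw [hjyc, hByy, hBuy] at hjy
    have hY4 : (4:ℝ) ≤ B P (u+w) (u+w) := four_le_B_self P hy
    rw [hByy] at hY4
    have hjyu1 : jyu = 1 := by
      have h0 : (0:ℝ) < (jyu:ℝ) := by nlinarith only [hjy, hY4, hU4, hBuw0]
      have h1 : (0:ℤ) < jyu := by exact_mod_cast h0
      have hple := prod_le_three P hu hy hyu hynu
      rw [hcuy, hjyc, hB] at hple
      push_cast at hple
      have h2 : 2 * jyu ≤ 3 := by exact_mod_cast (by linarith only [hple] : (2:ℝ) * jyu ≤ 3)
      omega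
    rw [hjyu1] at hjy; push_cast at hjy
    have hWU : B P w w = B P u u := by linarith only [hjy, hBuw0]
    have hBvw : 2 * B P v w = - B P u u := by
      linarith only [hn4b, hBuv0, hBuw0, hVU, hWU]
    obtain ⟨jxq, hjc⟩ := P.integral (u+v) hx (v+w) hq
    have hj := bridge P hx (v+w)
    have hXval : B P (u+v) (u+v) = 2 * B P u u := by
      rw [hBxx]; linarith only [hBuv0, hVU]
    rw [hjc, hXval, hBqx] at hj
    have := int_cancel hU0 (p := 2 * jxq) (q := 1)
      (by push_cast; linarith only [hj, hBuv0, hBuw0, hVU, hBvw])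
    omega
  · -- case (1,-1)
    have hn1' : n1 = 1 := by rcases P1 with ⟨_, h⟩ | ⟨h, _⟩ <;> omega
    rw [hA] at e1; push_cast at e1
    rw [hn1'] at f1; push_cast at f1
    rw [hB] at e2; push_cast at e2
    have hVU : B P v v = B P u u := by linarith only [e1, f1]
    have hm4' : m4 = -2 := by omega
    have hn4neg : n4 < 0 := s4 (by omega)
    have hn4' : n4 = -1 := by rw [hm4'] at pr4; omega
    rw [hn4', hBbb] at hn4b; push_cast at hn4b
    have hBvwWw : 2 * B P v w + B P w w = 0 := by
      linarith only [hn4b, hVU, e1, e2]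
    have he3' : (m3:ℝ) * B P u u + B P w w = 0 := by
      rw [hVU] at e3; linarith only [e3, hBvwWw]
    have hf2' : (n2:ℝ) * B P w w + B P u u = 0 := by linarith only [f2, e2]
    have hm3neg : m3 < 0 := by
      have h0 : (m3:ℝ) * B P u u < 0 := by linarith only [he3', hW4]
      have h1 : (m3:ℝ) < 0 := by nlinarith only [h0, hU4]
      exact_mod_cast h1
    have hmuln : m3 * n2 = 1 := by
      have hUW : (0:ℝ) < B P u u * B P w w := by nlinarith only [hU4, hW4]
      refine int_cancel hUW (p := m3 * n2) (q := 1) ?_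
      push_cast
      linear_combination ((n2:ℝ) * B P w w) * he3' - B P w w * hf2'
    have hn2neg : n2 < 0 := s2 (by omega)
    have hm3' : m3 = -1 := by
      interval_cases m3 <;> omega
    have hn2' : n2 = -1 := by rw [hm3'] at hmuln; omega
    rw [hn2'] at f2; push_cast at f2
    have hWU : B P w w = B P u u := by linarith only [f2, e2]
    rw [hm3'] at e3; push_cast at e3
    obtain ⟨jxq, hjc⟩ := P.integral (u+v) hx (v+w) hq
    have hj := bridge P hx (v+w)
    have hXval : B P (u+v) (u+v) = 3 * B P u u := by
      rw [hBxx]; linarith only [e1, hVU]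
    rw [hjc, hXval, hBqx] at hj
    have := int_cancel hU0 (p := 3 * jxq) (q := 1)
      (by push_cast; rw [hVU] at e3; linarith only [hj, e1, e2, e3, hVU])
    omega
  · -- case (0,-1)
    rw [hA] at e1; push_cast at e1
    rw [hB] at e2; push_cast at e2
    have hBuv0 : B P u v = 0 := by linarith only [e1]
    have hm4' : m4 = -3 := by omega
    have hn4neg : n4 < 0 := s4 (by omega)
    have hn4' : n4 = -1 := by rw [hm4'] at pr4; omega
    rw [hn4', hBbb] at hn4b; push_cast at hn4b
    obtain ⟨jxu, hjuc⟩ := P.integral (u+v) hx u hu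
    have hju := bridge P hx u
    rw [hjuc, hBxx, hBux] at hju
    have hX4 : (4:ℝ) ≤ B P (u+v) (u+v) := four_le_B_self P hx
    rw [hBxx] at hX4
    have hjxu1 : jxu = 1 := by
      have h0 : (0:ℝ) < (jxu:ℝ) := by nlinarith only [hju, hX4, hU4, hBuv0]
      have h1 : (0:ℤ) < jxu := by exact_mod_cast h0
      have hple := prod_le_three P hu hx hxu hxnu
      rw [hcux, hjuc, hA] at hple
      push_cast at hple
      have h2 : 2 * jxu ≤ 3 := by exact_mod_cast (by linarith only [hple] : (2:ℝ) * jxu ≤ 3)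
      omega
    rw [hjxu1] at hju; push_cast at hju
    have hVU : B P v v = B P u u := by linarith only [hju, hBuv0]
    have hBvwWw : 2 * B P v w + B P w w = 0 := by
      linarith only [hn4b, hBuv0, e2, hVU]
    have he3' : (m3:ℝ) * B P u u + B P w w = 0 := by
      rw [hVU] at e3; linarith only [e3, hBvwWw]
    have hf2' : (n2:ℝ) * B P w w + B P u u = 0 := by linarith only [f2, e2]
    have hm3neg : m3 < 0 := by
      have h0 : (m3:ℝ) * B P u u < 0 := by linarith only [he3', hW4]
      have h1 : (m3:ℝ) < 0 := by nlinarith only [h0, hU4]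
      exact_mod_cast h1
    have hmuln : m3 * n2 = 1 := by
      have hUW : (0:ℝ) < B P u u * B P w w := by nlinarith only [hU4, hW4]
      refine int_cancel hUW (p := m3 * n2) (q := 1) ?_
      push_cast
      linear_combination ((n2:ℝ) * B P w w) * he3' - B P w w * hf2'
    have hn2neg : n2 < 0 := s2 (by omega)
    have hm3' : m3 = -1 := by
      interval_cases m3 <;> omega
    have hn2' : n2 = -1 := by rw [hm3'] at hmuln; omega
    rw [hn2'] at f2; push_cast at f2
    have hWU : B P w w = B P u u := by linarith only [f2, e2]
    rw [hm3'] at e3; push_cast at e3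
    obtain ⟨jbv, hjc⟩ := P.integral (v+w-u) hb v hv
    have hj := bridge P hb v
    have hBval : B P (v+w-u) (v+w-u) = 3 * B P u u := by
      rw [hBbb]
      linarith only [hVU, hBvwWw, hBuv0, e2, hWU]
    rw [hjc, hBval, hBvb] at hj
    have := int_cancel hU0 (p := 3 * jbv) (q := 1)
      (by push_cast; rw [hVU] at e3; linarith only [hj, e3, hBuv0, hVU])
    omega
  · -- case (1,-2)
    have hn1' : n1 = 1 := by rcases P1 with ⟨_, h⟩ | ⟨h, _⟩ <;> omega
    rw [hA] at e1; push_cast at e1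
    rw [hn1'] at f1; push_cast at f1
    rw [hB] at e2; push_cast at e2
    have hVU : B P v v = B P u u := by linarith only [e1, f1]
    have hn2neg : n2 < 0 := s2 (by omega)
    have hn2' : n2 = -1 := by rw [hB] at pr2; omega
    rw [hn2'] at f2; push_cast at f2
    have hWU : B P w w = 2 * B P u u := by linarith only [f2, e2]
    have hm4' : m4 = -3 := by omega
    have hn4neg : n4 < 0 := s4 (by omega)
    have hn4' : n4 = -1 := by rw [hm4'] at pr4; omega
    rw [hn4', hBbb] at hn4b; push_cast at hn4b
    have hBvw : B P v w = - B P u u := by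
      linarith only [hn4b, hVU, hWU, e1, e2]
    obtain ⟨jxq, hjc⟩ := P.integral (u+v) hx (v+w) hq
    have hj := bridge P hx (v+w)
    have hXval : B P (u+v) (u+v) = 3 * B P u u := by
      rw [hBxx]; linarith only [e1, hVU]
    rw [hjc, hXval, hBqx] at hj
    have := int_cancel hU0 (p := 3 * jxq) (q := -1)
      (by push_cast; linarith only [hj, e1, e2, hVU, hBvw])
    omega

lemma lemM {u v w : V} (hu : u ∈ P.Φ) (hv : v ∈ P.Φ) (hw : w ∈ P.Φ)
    (hx : u + v ∈ P.Φ) (hy : u + w ∈ P.Φ) (hq : v + w ∈ P.Φ) (hb : v + w - u ∈ P.Φ) :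
    False := by
  rcases le_total (P.coroot u w) (P.coroot u v) with h | h
  · exact lemM_core P hu hv hw hx hy hq hb h
  · refine lemM_core P hu hw hv hy hx ?_ ?_ h
    · rwa [add_comm w v]
    · rwa [add_comm w v]


end RSAux

/-- In a reduced root system Φ, let α₀, α₁, β₀, β₁, γ be five roots such that
α₀ + β₀ = γ = α₁ + β₁.  Then in each of the pairs (α₀+α₁, α₀+β₁), (β₀+α₁, β₀+β₁),
(α₁+α₀, α₁+β₀), (β₁+α₀, β₁+β₀) at least one member is not a root of Φ. -/
theorem stmt3 (V : Type*) [AddCommGroup V] [Module ℝ V] [FiniteDimensional ℝ V]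
    (P : RootSystemData V)
    (α₀ α₁ β₀ β₁ γ : V) (hα₀ : α₀ ∈ P.Φ) (hα₁ : α₁ ∈ P.Φ) (hβ₀ : β₀ ∈ P.Φ) (hβ₁ : β₁ ∈ P.Φ)
    (hγ : γ ∈ P.Φ) (h0 : α₀ + β₀ = γ) (h1 : α₁ + β₁ = γ) :
    (α₀ + α₁ ∉ P.Φ ∨ α₀ + β₁ ∉ P.Φ) ∧ (β₀ + α₁ ∉ P.Φ ∨ β₀ + β₁ ∉ P.Φ) ∧
    (α₁ + α₀ ∉ P.Φ ∨ α₁ + β₀ ∉ P.Φ) ∧ (β₁ + α₀ ∉ P.Φ ∨ β₁ + β₀ ∉ P.Φ) := by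
  have hq1 : α₁ + β₁ ∈ P.Φ := by rw [h1]; exact hγ
  have hq0 : α₀ + β₀ ∈ P.Φ := by rw [h0]; exact hγ
  refine ⟨?_, ?_, ?_, ?_⟩
  · by_contra h
    push_neg at h
    refine RSAux.lemM P hα₀ hα₁ hβ₁ h.1 h.2 hq1 ?_
    have he : α₁ + β₁ - α₀ = β₀ := by rw [h1, ← h0]; abel
    rw [he]; exact hβ₀
  · by_contra h
    push_neg at h
    refine RSAux.lemM P hβ₀ hα₁ hβ₁ h.1 h.2 hq1 ?_
    have he : α₁ + β₁ - β₀ = α₀ := by rw [h1, ← h0]; abel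
    rw [he]; exact hα₀
  · by_contra h
    push_neg at h
    refine RSAux.lemM P hα₁ hα₀ hβ₀ h.1 h.2 hq0 ?_
    have he : α₀ + β₀ - α₁ = β₁ := by rw [h0, ← h1]; abel
    rw [he]; exact hβ₁
  · by_contra h
    push_neg at h
    refine RSAux.lemM P hβ₁ hα₀ hβ₀ h.1 h.2 hq0 ?_
    have he : α₀ + β₀ - β₁ = α₁ := by rw [h0, ← h1]; abel
    rw [he]; exact hα₁
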